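/- Let λ, μ, ξ > 0, q ∈ (0,1], and let x₂ = x₂(q) ∈ (0,1) be the smaller root of (λq+μ+ξ)x = λq + μx². Define p(0,0) = ξ/(ξ+η) and p(k,1) = η(1-x₂)x₂^k/(ξ+η) for k ≥ 0, where η > 0. Then these numbers are nonnegative, sum to 1, and satisfy the balance equations: η·p(0,0) = ξ·Σ_{k≥0} p(k,1); (λq+ξ)p(0,1) = μ·p(1,1) + η·p(0,0); and (λq+μ+ξ)p(k,1) = λq·p(k-1,1) + μ·p(k+1,1) for k ≥ 1. -/

import Mathlib

theorem stationary_distribution (lam μ ξ η q x2 : ℝ) (hlam : 0 < lam) (hμ : 0 < μ)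
    (hξ : 0 < ξ) (hη : 0 < η) (hq0 : 0 < q) (hq1 : q ≤ 1)
    (hx2a : 0 < x2) (hx2b : x2 < 1)
    (hroot : (lam * q + μ + ξ) * x2 = lam * q + μ * x2 ^ 2) :
    let p00 : ℝ := ξ / (ξ + η)
    let p : ℕ → ℝ := fun k => η * (1 - x2) * x2 ^ k / (ξ + η)
    (0 ≤ p00 ∧ ∀ k, 0 ≤ p k) ∧
    p00 + ∑' k : ℕ, p k = 1 ∧
    η * p00 = ξ * ∑' k : ℕ, p k ∧
    (lam * q + ξ) * p 0 = μ * p 1 + η * p00 ∧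
    ∀ k : ℕ, 1 ≤ k → (lam * q + μ + ξ) * p k = lam * q * p (k - 1) + μ * p (k + 1) := by
  intro p00 p
  have hs : 0 < ξ + η := by linarith
  have hg : ∑' k : ℕ, x2 ^ k = (1 - x2)⁻¹ := tsum_geometric_of_lt_one hx2a.le hx2b
  have hsum : ∑' k : ℕ, p k = η / (ξ + η) := by
    have : ∑' k : ℕ, p k = (η * (1 - x2) / (ξ + η)) * ∑' k : ℕ, x2 ^ k := by
      rw [← tsum_mul_left]
      apply tsum_congr; intro k; simp [p]; ring
    have h1 : (1:ℝ) - x2 ≠ 0 := by linarith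
    rw [this, hg, div_mul_eq_mul_div, mul_assoc, mul_inv_cancel₀ h1, mul_one]
  refine ⟨⟨?_, ?_⟩, ?_, ?_, ?_, ?_⟩
  · positivity
  · intro k
    have h1 : (0:ℝ) ≤ 1 - x2 := by linarith
    have : 0 ≤ x2 ^ k := pow_nonneg hx2a.le k
    positivity
  · rw [hsum]; show ξ / (ξ + η) + η / (ξ + η) = 1
    rw [← add_div, div_self hs.ne']
  · rw [hsum]; show η * (ξ / (ξ + η)) = ξ * (η / (ξ + η)); ring
  · show (lam * q + ξ) * (η * (1 - x2) * x2 ^ 0 / (ξ + η)) =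
      μ * (η * (1 - x2) * x2 ^ 1 / (ξ + η)) + η * (ξ / (ξ + η))
    field_simp
    nlinarith [hroot]
  · intro k hk
    obtain ⟨m, rfl⟩ : ∃ m, k = m + 1 := ⟨k - 1, by omega⟩
    show (lam * q + μ + ξ) * (η * (1 - x2) * x2 ^ (m + 1) / (ξ + η)) =
      lam * q * (η * (1 - x2) * x2 ^ (m + 1 - 1) / (ξ + η)) +
      μ * (η * (1 - x2) * x2 ^ (m + 1 + 1) / (ξ + η))
    simp only [Nat.add_sub_cancel]
    have h2 : ξ + η ≠ 0 := hs.ne'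
    field_simp
    linear_combination (1 - x2) * x2 ^ m * hroot
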